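/- Let U ∈ ℝ^{w×r} have orthonormal columns u₁, …, u_r, let σ₁, …, σ_r ≥ c_σ for some constant c_σ > 0, and let E ∈ ℝ^{w×r} have columns e₁, …, e_r with ‖e_i‖₂ < σ_i for every i. Define σ̂_i = ‖σ_i·u_i + e_i‖₂ > 0 and the diagonal matrices S = diag(σ₁, …, σ_r), Ŝ = diag(σ̂₁, …, σ̂_r). Then ‖Ŝ⁻¹ − S⁻¹‖_F ≤ ‖E‖_F / (c_σ · min_{1≤i≤r} (σ_i − ‖e_i‖₂)). -/

import Mathlib

open Matrix

/-- Euclidean norm of a vector in ℝ^n. -/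
noncomputable def vnorm {n : ℕ} (v : Fin n → ℝ) : ℝ :=
  Real.sqrt (∑ i, (v i) ^ 2)

/-- Frobenius norm of a real matrix. -/
noncomputable def frob {m n : ℕ} (M : Matrix (Fin m) (Fin n) ℝ) : ℝ :=
  Real.sqrt (∑ i, ∑ j, (M i j) ^ 2)

lemma vnorm_eq_norm {n : ℕ} (v : Fin n → ℝ) :
    vnorm v = ‖(WithLp.equiv 2 (Fin n → ℝ)).symm v‖ := by
  rw [EuclideanSpace.norm_eq]
  simp [vnorm, Real.norm_eq_abs, sq_abs]

lemma vnorm_triangle_diff {n : ℕ} (x y : Fin n → ℝ) :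
    |vnorm (fun k => x k + y k) - vnorm x| ≤ vnorm y := by
  rw [vnorm_eq_norm, vnorm_eq_norm, vnorm_eq_norm]
  have h : (WithLp.equiv 2 (Fin n → ℝ)).symm (fun k => x k + y k) -
      (WithLp.equiv 2 (Fin n → ℝ)).symm x = (WithLp.equiv 2 (Fin n → ℝ)).symm y := by
    ext k; simp [PiLp.toLp_apply]
  have := abs_norm_sub_norm_le ((WithLp.equiv 2 (Fin n → ℝ)).symm (fun k => x k + y k))
    ((WithLp.equiv 2 (Fin n → ℝ)).symm x)
  rwa [h] at this

/-- Aggregate reciprocal singular-value bound from the error analysis of the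
SWICCA algorithm (Theorem 2): with `σ̂_i = ‖σ_i·u_i + e_i‖₂`,
`‖Ŝ⁻¹ − S⁻¹‖_F ≤ ‖E‖_F / (c_σ · min_i (σ_i − ‖e_i‖₂))`. -/
theorem swicca_reciprocal_singular_value_matrix_bound {w r : ℕ} (hr : 0 < r)
    (U E : Matrix (Fin w) (Fin r) ℝ) (hU : Uᵀ * U = 1)
    (σ : Fin r → ℝ) (cσ : ℝ) (hcσ : 0 < cσ) (hσ : ∀ i, cσ ≤ σ i)
    (hE : ∀ i, vnorm (fun k => E k i) < σ i) :
    frob (Matrix.diagonal (fun i => (vnorm (fun k => σ i * U k i + E k i))⁻¹) -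
        Matrix.diagonal (fun i => (σ i)⁻¹)) ≤
      frob E / (cσ * ⨅ i, (σ i - vnorm (fun k => E k i))) := by
  haveI : Nonempty (Fin r) := ⟨⟨0, hr⟩⟩
  set e : Fin r → ℝ := fun i => vnorm (fun k => E k i) with he
  set s : Fin r → ℝ := fun i => vnorm (fun k => σ i * U k i + E k i) with hs
  set m : ℝ := ⨅ i, (σ i - e i) with hm
  have hσpos : ∀ i, 0 < σ i := fun i => hcσ.trans_le (hσ i)
  have henn : ∀ i, 0 ≤ e i := fun i => Real.sqrt_nonneg _
  have hpos : ∀ i, 0 < σ i - e i := fun i => sub_pos.mpr (hE i)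
  -- column norms of U
  have hUcol : ∀ i, vnorm (fun k => σ i * U k i) = σ i := by
    intro i
    have h1 : ∑ k, U k i * U k i = 1 := by
      have := congrFun (congrFun hU i) i
      simpa [Matrix.mul_apply, Matrix.one_apply, Matrix.transpose_apply] using this
    have h2 : ∑ k, (σ i * U k i) ^ 2 = (σ i) ^ 2 := by
      have : ∑ k, (σ i * U k i) ^ 2 = (σ i) ^ 2 * ∑ k, U k i * U k i := by
        rw [Finset.mul_sum]; apply Finset.sum_congr rfl; intro k _; ring
      rw [this, h1, mul_one]
    simp only [vnorm]
    rw [h2, Real.sqrt_sq (hσpos i).le]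
  -- triangle inequality
  have htri : ∀ i, |s i - σ i| ≤ e i := by
    intro i
    have := vnorm_triangle_diff (fun k => σ i * U k i) (fun k => E k i)
    rw [hUcol i] at this
    exact this
  have hspos : ∀ i, σ i - e i ≤ s i := by
    intro i
    have h := abs_le.mp (htri i)
    linarith [h.1]
  -- m bounds
  have hbdd : BddBelow (Set.range fun i => σ i - e i) := (Set.finite_range _).bddBelow
  have hmle : ∀ i, m ≤ σ i - e i := fun i => ciInf_le hbdd i
  have hmpos : 0 < m := by
    obtain ⟨i0, hi0⟩ := Finite.exists_min (fun i => σ i - e i)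
    have : m = σ i0 - e i0 := le_antisymm (hmle i0) (le_ciInf hi0)
    rw [this]; exact hpos i0
  have hcm : 0 < cσ * m := mul_pos hcσ hmpos
  -- pointwise bound
  have hpoint : ∀ i, |(s i)⁻¹ - (σ i)⁻¹| ≤ e i / (cσ * m) := by
    intro i
    have hsipos : 0 < s i := lt_of_lt_of_le (hpos i) (hspos i)
    have heq : (s i)⁻¹ - (σ i)⁻¹ = (σ i - s i) / (s i * σ i) := by
      have h1 : s i ≠ 0 := hsipos.ne'
      have h2 : σ i ≠ 0 := (hσpos i).ne'
      field_simp
    rw [heq, abs_div, abs_of_pos (mul_pos hsipos (hσpos i))]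
    rw [div_le_div_iff₀ (mul_pos hsipos (hσpos i)) hcm]
    have h1 : |σ i - s i| ≤ e i := by rw [abs_sub_comm]; exact htri i
    have h2 : cσ * m ≤ s i * σ i := by
      have hms : m ≤ s i := (hmle i).trans (hspos i)
      nlinarith [hσ i, hmpos, hsipos]
    exact mul_le_mul h1 h2 hcm.le (henn i)
  -- frob of diagonal difference
  have hfd : frob (Matrix.diagonal (fun i => (s i)⁻¹) - Matrix.diagonal (fun i => (σ i)⁻¹))
      = Real.sqrt (∑ i, ((s i)⁻¹ - (σ i)⁻¹) ^ 2) := by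
    unfold frob
    congr 1
    apply Finset.sum_congr rfl
    intro i _
    rw [Finset.sum_eq_single i]
    · simp [Matrix.sub_apply]
    · intro j _ hj
      simp [Matrix.sub_apply, Matrix.diagonal_apply_ne' _ hj]
    · intro h; exact absurd (Finset.mem_univ i) h
  -- frob E
  have hfE : frob E = Real.sqrt (∑ i, (e i) ^ 2) := by
    unfold frob
    congr 1
    rw [Finset.sum_comm]
    apply Finset.sum_congr rfl
    intro i _
    rw [he]
    simp only [vnorm]
    rw [Real.sq_sqrt (Finset.sum_nonneg fun k _ => sq_nonneg _)]
  rw [hfd, hfE]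
  have hsum : ∑ i, ((s i)⁻¹ - (σ i)⁻¹) ^ 2 ≤ ∑ i, (e i / (cσ * m)) ^ 2 := by
    apply Finset.sum_le_sum
    intro i _
    have h := hpoint i
    have h0 : 0 ≤ e i / (cσ * m) := div_nonneg (henn i) hcm.le
    calc ((s i)⁻¹ - (σ i)⁻¹) ^ 2 = |(s i)⁻¹ - (σ i)⁻¹| ^ 2 := (sq_abs _).symm
      _ ≤ (e i / (cσ * m)) ^ 2 := pow_le_pow_left₀ (abs_nonneg _) h 2
  calc Real.sqrt (∑ i, ((s i)⁻¹ - (σ i)⁻¹) ^ 2)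
      ≤ Real.sqrt (∑ i, (e i / (cσ * m)) ^ 2) := Real.sqrt_le_sqrt hsum
    _ = Real.sqrt (∑ i, (e i) ^ 2) / (cσ * m) := by
        rw [show ∑ i, (e i / (cσ * m)) ^ 2 = (∑ i, (e i) ^ 2) / (cσ * m) ^ 2 by
          rw [Finset.sum_div]; apply Finset.sum_congr rfl; intro i _; rw [div_pow]]
        rw [Real.sqrt_div (Finset.sum_nonneg fun i _ => sq_nonneg _), Real.sqrt_sq hcm.le]
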